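/- Let R be a discrete valuation ring containing a field k, with uniformizer t. Let M be a finitely generated free R-module and let u_1, ..., u_n be elements of M, not all zero. For u in M define v(u) to be the largest natural number s such that u lies in t^s·M (with v(0) = ∞). Then the length (as an R-module) of the torsion submodule of the quotient M/⟨u_1, ..., u_n⟩ is at least min_i v(u_i). -/

import Mathlib

/-- The length of a module, defined as the Krull dimension of its lattice of
submodules (i.e. the supremum of the lengths of strictly increasing chains of
submodules). -/
noncomputable def moduleLength (R M : Type*) [CommRing R] [AddCommGroup M]
    [Module R M] : WithBot ℕ∞ :=
  Order.krullDim (Submodule R M)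

/-- Lemma 5.6(1): Let `R` be a discrete valuation ring containing a field `k`,
with uniformizer `t`, let `M` be a finitely generated free `R`-module and
`u 1, ..., u n ∈ M` not all zero.  For `u ∈ M` let `v u` be the largest natural
number `s` with `u ∈ t^s · M` (with `v 0 = ∞`); this is encoded by the
characterization `hv`.  Then the length of the torsion submodule of
`M ⧸ ⟨u 1, ..., u n⟩` is at least `min_i v (u i)`. -/
theorem stmt_0 {k R M : Type*} [Field k] [CommRing R] [IsDomain R]
    [IsDiscreteValuationRing R] [Algebra k R]
    [AddCommGroup M] [Module R M] [Module.Free R M] [Module.Finite R M]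
    (t : R) (ht : Irreducible t)
    {n : ℕ} (u : Fin n → M) (hu : ∃ i, u i ≠ 0)
    (v : M → ℕ∞)
    (hv : ∀ (m : M) (s : ℕ), (s : ℕ∞) ≤ v m ↔ ∃ m' : M, m = t ^ s • m') :
    ((⨅ i, v (u i) : ℕ∞) : WithBot ℕ∞) ≤
      moduleLength R
        (Submodule.torsion R (M ⧸ Submodule.span R (Set.range u))) := by
  classical
  obtain ⟨j₀, hj₀⟩ := hu
  have ht0 : t ≠ 0 := ht.ne_zero
  -- v is finite on nonzero elements
  have hfin : ∀ m : M, m ≠ 0 → v m ≠ ⊤ := by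
    intro m hm hvm
    set b := Module.Free.chooseBasis R M with hbdef
    have hb : ∃ j, b.repr m j ≠ 0 := by
      by_contra h
      push_neg at h
      refine hm (b.repr.map_eq_zero_iff.mp ?_)
      ext j
      simpa using h j
    obtain ⟨j, hj⟩ := hb
    obtain ⟨N, uu, huu⟩ := IsDiscreteValuationRing.eq_unit_mul_pow_irreducible hj ht
    have hle : ((N + 1 : ℕ) : ℕ∞) ≤ v m := hvm ▸ le_top
    obtain ⟨m', hm'⟩ := (hv m (N + 1)).mp hle
    have hdvd : t ^ (N + 1) ∣ b.repr m j := by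
      refine ⟨b.repr m' j, ?_⟩
      rw [hm', map_smul]
      simp [Finsupp.smul_apply, smul_eq_mul]
    rw [huu] at hdvd
    have hdvd' : t * t ^ N ∣ (uu : R) * t ^ N := by
      rwa [pow_succ, mul_comm (t ^ N) t] at hdvd
    have : t ∣ (uu : R) := (mul_dvd_mul_iff_right (pow_ne_zero N ht0)).mp hdvd'
    exact ht.not_isUnit (isUnit_of_dvd_unit this uu.isUnit)
  -- the infimum is finite
  have hne : (⨅ i, v (u i)) ≠ ⊤ := by
    intro h
    have h1 : (⊤ : ℕ∞) ≤ v (u j₀) := h ▸ iInf_le (fun i => v (u i)) j₀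
    exact hfin _ hj₀ (top_le_iff.mp h1)
  obtain ⟨s, hs'⟩ := (WithTop.ne_top_iff_exists).mp hne
  have hs : (s : ℕ∞) = ⨅ i, v (u i) := by exact_mod_cast hs'
  -- the infimum is attained
  have : Nonempty (Fin n) := ⟨j₀⟩
  obtain ⟨i₀, -, hi₀⟩ := Finset.exists_min_image Finset.univ (fun i => v (u i))
    Finset.univ_nonempty
  have hveq : v (u i₀) = (s : ℕ∞) := by
    refine le_antisymm ?_ ?_
    · rw [hs]; exact le_iInf fun j => hi₀ j (Finset.mem_univ j)
    · rw [hs]; exact iInf_le (fun i => v (u i)) i₀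
  -- choose witnesses
  have hw : ∀ i, ∃ m' : M, u i = t ^ s • m' := fun i =>
    (hv (u i) s).mp (hs ▸ iInf_le (fun i => v (u i)) i)
  choose w hw using hw
  set N := Submodule.span R (Set.range u) with hN
  set P : ℕ → Submodule R M := fun a => Submodule.span R (Set.range fun i => t ^ a • w i)
    with hP
  have hmemP : ∀ a (x : M), x ∈ P a ↔ ∃ c : Fin n → R, ∑ i, c i • (t ^ a • w i) = x := by
    intro a x
    exact Submodule.mem_span_range_iff_exists_fun R
  -- N ≤ P a for a ≤ s
  have hNP : ∀ a, a ≤ s → N ≤ P a := by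
    intro a ha
    rw [hN, Submodule.span_le]
    rintro x ⟨i, rfl⟩
    have : t ^ a • w i ∈ P a := Submodule.subset_span ⟨i, rfl⟩
    have h2 : u i = t ^ (s - a) • (t ^ a • w i) := by
      rw [hw i, smul_smul, ← pow_add, Nat.sub_add_cancel ha]
    rw [h2]
    exact Submodule.smul_mem _ _ this
  have hPmono : ∀ a, P (a + 1) ≤ P a := by
    intro a
    rw [hP, Submodule.span_le]
    rintro x ⟨i, rfl⟩
    show t ^ (a + 1) • w i ∈ P a
    rw [pow_succ', mul_smul]
    exact Submodule.smul_mem _ _ (Submodule.subset_span ⟨i, rfl⟩)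
  -- elements of P a are divisible by t^a
  have hPel : ∀ a (x : M), x ∈ P a → ∃ m : M, x = t ^ a • m := by
    intro a x hx
    obtain ⟨c, hc⟩ := (hmemP a x).mp hx
    refine ⟨∑ i, c i • w i, ?_⟩
    rw [← hc, Finset.smul_sum]
    refine Finset.sum_congr rfl fun i _ => ?_
    rw [smul_comm]
  -- t^b • P a ≤ P (a+b)
  have hPsmul : ∀ a b (x : M), x ∈ P a → t ^ b • x ∈ P (a + b) := by
    intro a b x hx
    obtain ⟨c, hc⟩ := (hmemP a x).mp hx
    rw [← hc, Finset.smul_sum]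
    refine Submodule.sum_mem _ fun i _ => ?_
    have : t ^ b • c i • t ^ a • w i = c i • (t ^ (a + b) • w i) := by
      simp only [smul_smul]
      congr 1
      ring
    rw [this]
    exact Submodule.smul_mem _ _ (Submodule.subset_span ⟨i, rfl⟩)
  have hPsN : P s ≤ N := by
    rw [hP, Submodule.span_le]
    rintro x ⟨i, rfl⟩
    show t ^ s • w i ∈ N
    rw [← hw i]
    exact Submodule.subset_span ⟨i, rfl⟩
  -- strictness of P
  have hPstrict : ∀ a, a < s → ¬ P a ≤ P (a + 1) := by
    intro a ha hle
    have h1 : t ^ a • w i₀ ∈ P (a + 1) := hle (Submodule.subset_span ⟨i₀, rfl⟩)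
    obtain ⟨m, hm⟩ := hPel (a + 1) _ h1
    have h2 : u i₀ = t ^ (s + 1) • m := by
      rw [hw i₀]
      have : t ^ s • w i₀ = t ^ (s - a) • (t ^ a • w i₀) := by
        rw [smul_smul, ← pow_add, Nat.sub_add_cancel ha.le]
      rw [this, hm, smul_smul, ← pow_add]
      congr 2
      omega
    have h3 : ((s + 1 : ℕ) : ℕ∞) ≤ v (u i₀) := (hv (u i₀) (s + 1)).mpr ⟨m, h2⟩
    rw [hveq] at h3
    exact Nat.not_succ_le_self s (by exact_mod_cast h3)
  -- pass to the quotient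
  set T := Submodule.torsion R (M ⧸ N) with hT
  set Q : ℕ → Submodule R (M ⧸ N) := fun a => (P a).map N.mkQ with hQ
  have hQT : ∀ a, a ≤ s → Q a ≤ T := by
    rintro a ha x hx
    obtain ⟨y, hy, rfl⟩ := hx
    rw [hT, Submodule.mem_torsion_iff]
    refine ⟨⟨t ^ (s - a), mem_nonZeroDivisors_of_ne_zero (pow_ne_zero _ ht0)⟩, ?_⟩
    have : t ^ (s - a) • y ∈ N := by
      have := hPsmul a (s - a) y hy
      rw [Nat.add_sub_cancel' ha] at this
      exact hPsN this
    show t ^ (s - a) • N.mkQ y = 0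
    rw [← map_smul, Submodule.mkQ_apply, Submodule.Quotient.mk_eq_zero]
    exact this
  set D : ℕ → Submodule R T := fun a => (Q a).comap T.subtype with hD
  have hDstrict : ∀ a, a < s → D (a + 1) < D a := by
    intro a ha
    refine lt_of_le_of_ne (Submodule.comap_mono (Submodule.map_mono (hPmono a))) ?_
    intro heq
    have hQeq : Q (a + 1) = Q a := by
      have h1 : Submodule.map T.subtype (D (a + 1)) = Submodule.map T.subtype (D a) := by
        rw [heq]
      rwa [hD, Submodule.map_comap_subtype, Submodule.map_comap_subtype,
        inf_of_le_right (hQT (a + 1) (by omega)), inf_of_le_right (hQT a ha.le)] at h1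
    refine hPstrict a ha ?_
    intro y hy
    have h2 : N.mkQ y ∈ Q (a + 1) := hQeq ▸ ⟨y, hy, rfl⟩
    obtain ⟨z, hz, hzk⟩ := h2
    have h3 : y - z ∈ N := by
      rwa [← Submodule.Quotient.eq, ← Submodule.mkQ_apply, ← Submodule.mkQ_apply, eq_comm]
    have : y = z + (y - z) := by abel
    rw [this]
    exact Submodule.add_mem _ hz (hNP (a + 1) (by omega) h3)
  -- build the chain
  let p : LTSeries (Submodule R T) := ⟨s, fun j => D (s - j.val), by
    intro i
    have h1 : (i : ℕ) < s := i.2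
    show D (s - (i : ℕ)) < D (s - ((i : ℕ) + 1))
    have e1 : s - (i : ℕ) = (s - (i : ℕ) - 1) + 1 := by omega
    have e2 : s - ((i : ℕ) + 1) = s - (i : ℕ) - 1 := by omega
    rw [e1, e2]
    exact hDstrict _ (by omega)⟩
  have hkrull := Order.LTSeries.length_le_krullDim p
  have hlen : p.length = s := rfl
  rw [hlen] at hkrull
  rw [← hs]
  exact_mod_cast hkrull
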